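/- Let p be a prime and k ≥ 1, and let σ be the regular p^k-cycle on ZMod (p^k) given by σ(i) = i + 1. Then there exists a unique Sylow p-subgroup P of the symmetric group Perm(ZMod (p^k)) with σ ∈ P. -/

import Mathlib

open Equiv

lemma commute_addRight_one {n : ℕ} [NeZero n] {π : Equiv.Perm (ZMod n)}
    (h : Commute π (Equiv.addRight (1 : ZMod n))) :
    π = Equiv.addRight (π 0) := by
  have step : ∀ x : ZMod n, π (x + 1) = π x + 1 := by
    intro x
    have := congrArg (fun s : Equiv.Perm (ZMod n) => s x) h
    simpa [Equiv.Perm.mul_apply] using this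
  have key : ∀ t : ℕ, π ((t : ℕ) : ZMod n) = π 0 + t := by
    intro t
    induction t with
    | zero => simp
    | succ t ih => push_cast; rw [step, ih]; ring
  ext x
  have hx : ((x.val : ℕ) : ZMod n) = x := ZMod.natCast_zmod_val x
  calc π x = π ((x.val : ℕ) : ZMod n) := by rw [hx]
    _ = π 0 + x.val := key x.val
    _ = x + π 0 := by rw [hx]; ring
    _ = Equiv.addRight (π 0) x := rfl

theorem key_unique (p : ℕ) (hp : p.Prime) (k : ℕ) :
    ∃! P : Sylow p (Equiv.Perm (ZMod (p ^ k))),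
      Equiv.addRight (1 : ZMod (p ^ k)) ∈ P := by
  haveI : Fact p.Prime := ⟨hp⟩
  induction k with
  | zero =>
    haveI : Subsingleton (ZMod (p ^ 0)) := by rw [pow_zero]; infer_instance
    obtain ⟨P⟩ := (inferInstance : Nonempty (Sylow p (Equiv.Perm (ZMod (p ^ 0)))))
    refine ⟨P, ?_, ?_⟩
    · have h1 : Equiv.addRight (1 : ZMod (p ^ 0)) = 1 :=
        Equiv.ext fun a => Subsingleton.elim _ _
      rw [h1]; exact one_mem _
    · intro Q _
      apply Sylow.ext
      ext x
      have hx : x = 1 := Equiv.ext fun a => Subsingleton.elim _ _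
      simp [hx, one_mem]
      exact iff_of_true (Subgroup.one_mem _) (Subgroup.one_mem _)
  | succ k ih =>
    haveI hn1 : NeZero (p ^ (k+1)) := ⟨pow_ne_zero _ hp.ne_zero⟩
    haveI hn2 : NeZero (p ^ k) := ⟨pow_ne_zero _ hp.ne_zero⟩
    haveI : Fact (1 < p ^ (k+1)) := ⟨Nat.one_lt_pow (Nat.succ_ne_zero k) hp.one_lt⟩
    set σ : Equiv.Perm (ZMod (p ^ (k+1))) := Equiv.addRight 1 with hσdef
    set z : Equiv.Perm (ZMod (p ^ (k+1))) :=
      Equiv.addRight ((p ^ k : ℕ) : ZMod (p ^ (k+1))) with hzdef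
    set C : Subgroup (Equiv.Perm (ZMod (p ^ (k+1)))) := Subgroup.centralizer {z} with hCdef
    set r : ZMod (p ^ (k+1)) →+* ZMod (p ^ k) :=
      ZMod.castHom (pow_dvd_pow p (Nat.le_succ k)) _ with hrdef
    set L : ZMod (p ^ k) → ZMod (p ^ (k+1)) := fun a => ((a.val : ℕ) : ZMod (p ^ (k+1)))
      with hLdef
    have hrL : ∀ a, r (L a) = a := by
      intro a
      simp only [hLdef, hrdef, map_natCast]
      exact ZMod.natCast_zmod_val a
    have hr0 : ∀ c : ZMod (p ^ (k+1)), r c = 0 →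
        ∃ t : ℕ, c = (t : ZMod (p ^ (k+1))) * ((p ^ k : ℕ) : ZMod (p ^ (k+1))) := by
      intro c hc
      have hcv : ((c.val : ℕ) : ZMod (p ^ (k+1))) = c := ZMod.natCast_zmod_val c
      have : ((c.val : ℕ) : ZMod (p ^ k)) = 0 := by
        rw [← map_natCast r, hcv, hc]
      obtain ⟨t, ht⟩ := (ZMod.natCast_eq_zero_iff _ _).mp this
      refine ⟨t, ?_⟩
      rw [← hcv, ht]; push_cast; ring
    -- membership in C means commuting with z; translation lemma
    have hC : ∀ π ∈ C, ∀ (x c : ZMod (p ^ (k+1))), r c = 0 → π (x + c) = π x + c := by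
      intro π hπ x c hc
      obtain ⟨t, ht⟩ := hr0 c hc
      have hcomm : Commute z π := by
        have := Subgroup.mem_centralizer_iff.mp hπ z rfl
        exact this
      have hcomt : Commute (z ^ t) π := hcomm.pow_left t
      have hzt : z ^ t = Equiv.addRight ((t : ZMod (p ^ (k+1))) * ((p ^ k : ℕ) : ZMod (p ^ (k+1)))) := by
        rw [hzdef, Equiv.nsmul_addRight, nsmul_eq_mul]
      have := congrArg (fun s : Equiv.Perm (ZMod (p ^ (k+1))) => s x) hcomt
      simp only [Equiv.Perm.mul_apply, hzt, Equiv.coe_addRight] at this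
      rw [ht, ← this]
    have hkey : ∀ π ∈ C, ∀ x, r (π (L (r x))) = r (π x) := by
      intro π hπ x
      have hc : r (L (r x) - x) = 0 := by rw [map_sub, hrL, sub_self]
      have := hC π hπ x (L (r x) - x) hc
      rw [show x + (L (r x) - x) = L (r x) by ring] at this
      rw [this, map_add, hc, add_zero]

    -- the homomorphism to the smaller symmetric group
    have hinvC : ∀ π : C, (π : Equiv.Perm (ZMod (p ^ (k+1))))⁻¹ ∈ C := by
      intro π
      simpa using C.inv_mem π.2
    set φfun : C → Equiv.Perm (ZMod (p ^ k)) := fun π =>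
      { toFun := fun a => r ((π : Equiv.Perm (ZMod (p ^ (k+1)))) (L a))
        invFun := fun a => r ((π : Equiv.Perm (ZMod (p ^ (k+1))))⁻¹ (L a))
        left_inv := by
          intro a
          show r ((π : Equiv.Perm (ZMod (p ^ (k+1))))⁻¹ (L (r ((π : Equiv.Perm (ZMod (p ^ (k+1)))) (L a))))) = a
          rw [hkey _ (hinvC π) ((π : Equiv.Perm (ZMod (p ^ (k+1)))) (L a))]
          rw [Equiv.Perm.coe_inv, Equiv.symm_apply_apply, hrL]
        right_inv := by
          intro a
          show r ((π : Equiv.Perm (ZMod (p ^ (k+1)))) (L (r ((π : Equiv.Perm (ZMod (p ^ (k+1))))⁻¹ (L a))))) = a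
          rw [hkey _ π.2 ((π : Equiv.Perm (ZMod (p ^ (k+1))))⁻¹ (L a))]
          rw [Equiv.Perm.coe_inv, Equiv.apply_symm_apply, hrL] } with hφfun
    set φ : C →* Equiv.Perm (ZMod (p ^ k)) := MonoidHom.mk' φfun (by
      intro π ρ
      ext a
      show r (((π * ρ : C) : Equiv.Perm (ZMod (p ^ (k+1)))) (L a))
        = r ((π : Equiv.Perm (ZMod (p ^ (k+1)))) (L (r ((ρ : Equiv.Perm (ZMod (p ^ (k+1)))) (L a)))))
      rw [hkey _ π.2]
      rfl) with hφdef
    have hφapply : ∀ (π : C) (a : ZMod (p ^ k)),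
        φ π a = r ((π : Equiv.Perm (ZMod (p ^ (k+1)))) (L a)) := fun _ _ => rfl

    have hrpk : r ((p ^ k : ℕ) : ZMod (p ^ (k+1))) = 0 := by
      rw [map_natCast, ZMod.natCast_self]
    have hφsurj : Function.Surjective φ := by
      intro τ
      set f : ZMod (p ^ (k+1)) → ZMod (p ^ (k+1)) :=
        fun x => L (τ (r x)) + (x - L (r x)) with hf
      set g : ZMod (p ^ (k+1)) → ZMod (p ^ (k+1)) :=
        fun x => L (τ⁻¹ (r x)) + (x - L (r x)) with hg
      have hrf : ∀ x, r (f x) = τ (r x) := by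
        intro x
        simp only [hf, map_add, map_sub, hrL]
        ring
      have hrg : ∀ x, r (g x) = τ⁻¹ (r x) := by
        intro x
        simp only [hg, map_add, map_sub, hrL]
        ring
      have hgf : ∀ x, g (f x) = x := by
        intro x
        simp only [hg]
        rw [hrf, Equiv.Perm.coe_inv, Equiv.symm_apply_apply]
        simp only [hf]
        ring
      have hfg : ∀ x, f (g x) = x := by
        intro x
        simp only [hf]
        rw [hrg, Equiv.Perm.coe_inv, Equiv.apply_symm_apply, ← Equiv.Perm.coe_inv]
        simp only [hg]
        ring
      set e : Equiv.Perm (ZMod (p ^ (k+1))) := ⟨f, g, hgf, hfg⟩ with he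
      have heC : e ∈ C := by
        rw [hCdef, Subgroup.mem_centralizer_iff]
        intro w hw
        rw [Set.mem_singleton_iff] at hw
        subst hw
        ext x
        show z (e x) = e (z x)
        have hzx : z x = x + ((p ^ k : ℕ) : ZMod (p ^ (k+1))) := rfl
        have hrzx : r (z x) = r x := by rw [hzx, map_add, hrpk, add_zero]
        show e x + ((p ^ k : ℕ) : ZMod (p ^ (k+1))) = e (z x)
        show f x + ((p ^ k : ℕ) : ZMod (p ^ (k+1))) = f (z x)
        have hr2 : r (x + ((p ^ k : ℕ) : ZMod (p ^ (k+1)))) = r x := by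
          rw [map_add, hrpk, add_zero]
        simp only [hf, hzx, hr2]
        ring
      refine ⟨⟨e, heC⟩, ?_⟩
      ext a
      rw [hφapply]
      show r (f (L a)) = τ a
      rw [hrf, hrL]

    -- the kernel of φ is a p-group
    have hkerfix : ∀ π : C, π ∈ φ.ker →
        ∀ x, r ((π : Equiv.Perm (ZMod (p ^ (k+1)))) x) = r x := by
      intro π hπ x
      have h1 : φ π = 1 := hπ
      have h2 : φ π (r x) = r x := by rw [h1]; rfl
      rw [hφapply] at h2
      rw [← hkey _ π.2 x, h2]
    have hkerP : IsPGroup p φ.ker := by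
      intro g
      refine ⟨1, ?_⟩
      set π : Equiv.Perm (ZMod (p ^ (k+1))) := ((g : C) : Equiv.Perm (ZMod (p ^ (k+1)))) with hπdef
      have hπC : π ∈ C := (g : C).2
      have hπfix : ∀ x, r (π x) = r x := hkerfix (g : C) g.2
      have hstep : ∀ (x : ZMod (p ^ (k+1))) (j : ℕ), (π ^ j) x = x + j • (π x - x) := by
        intro x j
        induction j with
        | zero => simp
        | succ j hj =>
          rw [show π ^ (j+1) = π * π ^ j from pow_succ' π j, Equiv.Perm.mul_apply, hj]
          have hd : r ((j : ℕ) • (π x - x)) = 0 := by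
            rw [nsmul_eq_mul, map_mul, map_sub, hπfix, sub_self, mul_zero]
          rw [hC π hπC x _ hd, succ_nsmul]
          ring
      have hπp : π ^ p = 1 := by
        ext x
        rw [hstep x p]
        have hd : r (π x - x) = 0 := by rw [map_sub, hπfix, sub_self]
        obtain ⟨t, ht⟩ := hr0 _ hd
        have : (p : ℕ) • (π x - x) = 0 := by
          rw [ht, nsmul_eq_mul]
          have : ((p : ℕ) : ZMod (p ^ (k+1))) * (((p ^ k : ℕ)) : ZMod (p ^ (k+1)))
              = ((p ^ (k+1) : ℕ) : ZMod (p ^ (k+1))) := by push_cast; ring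
          calc ((p : ℕ) : ZMod (p ^ (k+1))) * ((t : ZMod (p ^ (k+1))) * ((p ^ k : ℕ) : ZMod (p ^ (k+1))))
              = (((p : ℕ) : ZMod (p ^ (k+1))) * ((p ^ k : ℕ) : ZMod (p ^ (k+1)))) * t := by ring
            _ = 0 := by rw [this, ZMod.natCast_self, zero_mul]
        rw [this, add_zero]
        rfl
      have : ((g ^ (p ^ 1) : φ.ker) : C) = ((1 : φ.ker) : C) := by
        apply Subtype.ext
        show (((g ^ (p ^ 1) : φ.ker) : C) : Equiv.Perm (ZMod (p ^ (k+1)))) = _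
        push_cast
        rw [pow_one]
        exact hπp
      exact Subtype.ext this

    have hσC : σ ∈ C := by
      rw [hCdef, Subgroup.mem_centralizer_iff]
      intro w hw
      rw [Set.mem_singleton_iff] at hw
      subst hw
      ext x
      simp [Equiv.Perm.mul_apply, hσdef, hzdef]
      ring
    have hPC : ∀ P : Sylow p (Equiv.Perm (ZMod (p ^ (k+1)))), σ ∈ P →
        (P : Subgroup (Equiv.Perm (ZMod (p ^ (k+1))))) ≤ C := by
      intro P hσP
      have hσne : σ ≠ 1 := by
        intro h
        have h2 : σ 0 = (1 : Equiv.Perm (ZMod (p ^ (k+1)))) 0 := by rw [h]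
        simp [hσdef] at h2
      haveI : Nontrivial ↥(P : Subgroup (Equiv.Perm (ZMod (p ^ (k+1))))) :=
        ⟨⟨⟨σ, show σ ∈ (P : Subgroup (Equiv.Perm (ZMod (p ^ (k+1))))) from hσP⟩, 1,
          by simp [Subtype.ext_iff, hσne]⟩⟩
      haveI : Finite ↥(P : Subgroup (Equiv.Perm (ZMod (p ^ (k+1))))) := inferInstance
      have hcnt : Nontrivial (Subgroup.center ↥(P : Subgroup (Equiv.Perm (ZMod (p ^ (k+1)))))) :=
        IsPGroup.center_nontrivial P.2
      obtain ⟨τ', hτ'⟩ := exists_ne (1 : Subgroup.center ↥(P : Subgroup (Equiv.Perm (ZMod (p ^ (k+1))))))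
      set τ : Equiv.Perm (ZMod (p ^ (k+1))) := τ'.1.1 with hτdef
      have hτP : τ ∈ P := τ'.1.2
      have hτcomm : ∀ ρ ∈ (P : Subgroup (Equiv.Perm (ZMod (p ^ (k+1))))), Commute τ ρ := by
        intro ρ hρ
        have h1 := Subgroup.mem_center_iff.mp τ'.2 ⟨ρ, hρ⟩
        have := congrArg (Subtype.val) h1
        push_cast at this
        exact this.symm
      have hτσ : Commute τ σ := hτcomm σ hσP
      have hτeq : τ = Equiv.addRight (τ 0) := commute_addRight_one hτσ
      have hune : τ 0 ≠ 0 := by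
        intro h
        apply hτ'
        have : τ = 1 := by rw [hτeq, h]; exact Equiv.addRight_zero
        apply Subtype.ext
        apply Subtype.ext
        exact this
      -- find c with c • (τ 0) = p^k
      set u : ZMod (p ^ (k+1)) := τ 0 with hudef
      have huval : u.val ≠ 0 := fun h => hune ((ZMod.val_eq_zero u).mp h)
      set j : ℕ := padicValNat p u.val with hjdef
      have hj1 : p ^ j ∣ u.val := pow_padicValNat_dvd
      obtain ⟨t, ht⟩ := hj1
      have hpt : ¬ p ∣ t := by
        intro hdvd
        obtain ⟨w, hw⟩ := hdvd
        have hval : u.val = p ^ (j + 1) * w := by rw [ht, hw, pow_succ]; ring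
        exact pow_succ_padicValNat_not_dvd huval (p := p) ⟨w, hval⟩
      have hjk : j ≤ k := by
        by_contra hcon
        push_neg at hcon
        have h1 : p ^ (k+1) ≤ p ^ j := Nat.pow_le_pow_right hp.pos hcon
        have h2 : p ^ j ≤ u.val := Nat.le_of_dvd (Nat.pos_of_ne_zero huval) ⟨t, ht⟩
        have h3 : u.val < p ^ (k+1) := ZMod.val_lt u
        omega
      have hco : Nat.Coprime t (p ^ (k+1)) :=
        Nat.Coprime.pow_right _ ((hp.coprime_iff_not_dvd.mpr hpt).symm)
      set s : (ZMod (p ^ (k+1)))ˣ := ZMod.unitOfCoprime t hco with hsdef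
      set c : ℕ := p ^ (k - j) * ((s⁻¹ : (ZMod (p ^ (k+1)))ˣ) : ZMod (p ^ (k+1))).val with hcdef
      have hcu : (c : ℕ) • u = ((p ^ k : ℕ) : ZMod (p ^ (k+1))) := by
        rw [nsmul_eq_mul]
        have hu : u = ((p : ZMod (p ^ (k+1))) ^ j) * ((s : (ZMod (p ^ (k+1))))) := by
          rw [ZMod.coe_unitOfCoprime]
          have : u = ((u.val : ℕ) : ZMod (p ^ (k+1))) := (ZMod.natCast_zmod_val u).symm
          rw [this, ht]
          push_cast
          ring
        have hcc : ((c : ℕ) : ZMod (p ^ (k+1)))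
            = ((p : ZMod (p ^ (k+1))) ^ (k - j)) * ((s⁻¹ : (ZMod (p ^ (k+1)))ˣ) : ZMod (p ^ (k+1))) := by
          rw [hcdef]
          push_cast
          rw [ZMod.natCast_zmod_val]
        rw [hcc, hu]
        have hss : ((s⁻¹ : (ZMod (p ^ (k+1)))ˣ) : ZMod (p ^ (k+1))) * (s : ZMod (p ^ (k+1))) = 1 := by
          rw [← Units.val_mul, inv_mul_cancel, Units.val_one]
        calc (p : ZMod (p ^ (k+1))) ^ (k - j) * ((s⁻¹ : (ZMod (p ^ (k+1)))ˣ) : ZMod (p ^ (k+1)))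
              * ((p : ZMod (p ^ (k+1))) ^ j * (s : ZMod (p ^ (k+1))))
            = ((p : ZMod (p ^ (k+1))) ^ (k - j) * (p : ZMod (p ^ (k+1))) ^ j)
              * (((s⁻¹ : (ZMod (p ^ (k+1)))ˣ) : ZMod (p ^ (k+1))) * (s : ZMod (p ^ (k+1)))) := by ring
          _ = (p : ZMod (p ^ (k+1))) ^ k := by
              rw [hss, mul_one, ← pow_add, Nat.sub_add_cancel hjk]
          _ = ((p ^ k : ℕ) : ZMod (p ^ (k+1))) := by norm_cast
      have hzτ : z = τ ^ c := by
        rw [hτeq, Equiv.nsmul_addRight, hcu]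
      intro ρ hρ
      rw [hCdef, Subgroup.mem_centralizer_iff]
      intro w hw
      rw [Set.mem_singleton_iff] at hw
      subst hw
      rw [hzτ]
      exact ((hτcomm ρ hρ).pow_left c)

    -- existence
    have hσpow : σ ^ (p ^ (k+1)) = 1 := by
      rw [hσdef, Equiv.nsmul_addRight]
      have : (p ^ (k+1) : ℕ) • (1 : ZMod (p ^ (k+1))) = 0 := by
        rw [nsmul_eq_mul, mul_one, ZMod.natCast_self]
      rw [this]
      exact Equiv.addRight_zero
    have hσPG : IsPGroup p (Subgroup.zpowers σ) := by
      obtain ⟨i, hi, hieq⟩ := (Nat.dvd_prime_pow hp).mp (orderOf_dvd_of_pow_eq_one hσpow)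
      exact IsPGroup.of_card (by rw [Nat.card_zpowers, hieq])
    obtain ⟨P₀, hP₀⟩ := hσPG.exists_le_sylow
    have hσP₀ : σ ∈ P₀ := hP₀ (Subgroup.mem_zpowers σ)
    -- uniqueness machinery
    haveI : Finite ↥C := inferInstance
    have hkle : ∀ R : Sylow p ↥C, φ.ker ≤ (R : Subgroup ↥C) := by
      intro R
      have hsup : IsPGroup p ↥(φ.ker ⊔ (R : Subgroup ↥C)) :=
        IsPGroup.to_sup_of_normal_left hkerP R.2
      have := R.3 hsup le_sup_right
      exact le_trans le_sup_left this.le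
    have main : ∀ Q : Sylow p (Equiv.Perm (ZMod (p ^ (k+1)))), σ ∈ Q → Q = P₀ := by
      intro Q hσQ
      have hQC := hPC Q hσQ
      have hP₀C := hPC P₀ hσP₀
      set Q' : Sylow p ↥C := Q.subtype hQC with hQ'def
      set P' : Sylow p ↥C := P₀.subtype hP₀C with hP'def
      have hφσ : φ ⟨σ, hσC⟩ = Equiv.addRight (1 : ZMod (p ^ k)) := by
        ext a
        rw [hφapply]
        show r (σ (L a)) = a + 1
        have : σ (L a) = L a + 1 := rfl
        rw [this, map_add, hrL, map_one]
      have hmem : ∀ (R : Sylow p (Equiv.Perm (ZMod (p ^ (k+1))))) (hRC : (R : Subgroup _) ≤ C),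
          σ ∈ R → Equiv.addRight (1 : ZMod (p ^ k)) ∈ (R.subtype hRC).mapSurjective hφsurj := by
        intro R hRC hσR
        rw [← hφσ]
        have h1 : (⟨σ, hσC⟩ : ↥C) ∈ (R.subtype hRC : Subgroup ↥C) := by
          rw [Sylow.coe_subtype, Subgroup.mem_subgroupOf]
          exact hσR
        exact ⟨⟨σ, hσC⟩, h1, rfl⟩
      obtain ⟨R₀, _, hR₀u⟩ := ih
      have heqmap : Q'.mapSurjective hφsurj = P'.mapSurjective hφsurj := by
        rw [hR₀u _ (hmem Q hQC hσQ), hR₀u _ (hmem P₀ hP₀C hσP₀)]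
      have heqsub : (Q' : Subgroup ↥C) = (P' : Subgroup ↥C) := by
        have h1 : Subgroup.map φ (Q' : Subgroup ↥C) = Subgroup.map φ (P' : Subgroup ↥C) := by
          have := congrArg (fun S : Sylow p (Equiv.Perm (ZMod (p ^ k))) =>
            (S : Subgroup (Equiv.Perm (ZMod (p ^ k))))) heqmap
          simpa [Sylow.coe_mapSurjective] using this
        have h2 := congrArg (Subgroup.comap φ) h1
        rw [Subgroup.comap_map_eq, Subgroup.comap_map_eq] at h2
        rw [sup_of_le_left (hkle Q'), sup_of_le_left (hkle P')] at h2
        exact h2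
      exact Sylow.subtype_injective (Sylow.ext heqsub)
    exact ⟨P₀, hσP₀, main⟩

/-- Let `p` be a prime and `k ≥ 1`, and let `σ` be the regular `p^k`-cycle on
`ZMod (p^k)` given by `σ(i) = i + 1`.  Then there is a unique Sylow `p`-subgroup of
the symmetric group `Perm (ZMod (p^k))` containing `σ`. -/
theorem stmt9 (p k : ℕ) (hp : p.Prime) (hk : 1 ≤ k) :
    ∃! P : Sylow p (Equiv.Perm (ZMod (p ^ k))),
      Equiv.addRight (1 : ZMod (p ^ k)) ∈ P := by
  exact key_unique p hp k
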